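/- Let θ(x) = ∑_{p prime, p ≤ x} log p, p_n the n-th prime, and g_n = p_{n+1} − p_n. Suppose (Trudgian's bound) that |θ(x) − x| < 0.2428127763 · x (log x)^{1/4} exp(−0.3935970880 √(log x)) for all x ≥ 149. Then for every n with p_n ≥ 11 one has g_n / p_n < 2 · 0.2428127763 (log p_n)^{1/4} exp(−0.3935970880 √(log p_n)) / (1 − 0.2428127763 (log p_n)^{1/4} exp(−0.3935970880 √(log p_n))). -/

import Mathlib

/-- The first Chebyshev function `θ(x) = ∑_{p prime, p ≤ x} log p`. -/
noncomputable def chebyshevθ (x : ℝ) : ℝ :=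
  ∑ p ∈ Finset.filter Nat.Prime (Finset.range (⌊x⌋₊ + 1)), Real.log p

/-- The `n`-th prime number, indexed so that `nthPrime 1 = 2`. -/
noncomputable def nthPrime (n : ℕ) : ℕ := Nat.nth Nat.Prime (n - 1)

/-- The `n`-th prime gap `gₙ = p_{n+1} - pₙ` (as a real number). -/
noncomputable def primeGap (n : ℕ) : ℝ := (nthPrime (n + 1) : ℝ) - (nthPrime n : ℝ)
open Real

lemma exp_lb (x : ℝ) (n : ℕ) (hn : (n:ℝ) ≠ 0) (h : 0 ≤ 1 + x / n) :
    (1 + x / n) ^ n ≤ Real.exp x := by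
  have h1 : Real.exp x = (Real.exp (x / n)) ^ n := by
    rw [← Real.exp_nat_mul]; congr 1; field_simp
  rw [h1]
  exact pow_le_pow_left₀ h (by linarith [Real.add_one_le_exp (x / n)]) n

lemma exp_ub (x : ℝ) (n : ℕ) (hn : (n:ℝ) ≠ 0) (h : x / n < 1) :
    Real.exp x ≤ ((1 - x / n)⁻¹) ^ n := by
  have h1 : Real.exp x = (Real.exp (x / n)) ^ n := by
    rw [← Real.exp_nat_mul]; congr 1; field_simp
  rw [h1]
  have h0 : 0 < 1 - x / n := by linarith
  have h2 : 1 - x / n ≤ Real.exp (-(x / n)) := by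
    linarith [Real.add_one_le_exp (-(x / n))]
  have h3 : Real.exp (x / n) ≤ (1 - x / n)⁻¹ := by
    rw [show Real.exp (x / n) = (Real.exp (-(x / n)))⁻¹ by rw [Real.exp_neg, inv_inv]]
    exact inv_anti₀ h0 h2
  exact pow_le_pow_left₀ (Real.exp_pos _).le h3 n

lemma f_anti : AntitoneOn (fun t : ℝ => Real.log t / 4 - 0.3935970880 * Real.sqrt t)
    (Set.Ici 2) := by
  have hd : ∀ x : ℝ, 2 ≤ x → HasDerivAt (fun t : ℝ => Real.log t / 4 - 0.3935970880 * Real.sqrt t)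
      (x⁻¹ / 4 - 0.3935970880 * (1 / (2 * Real.sqrt x))) x := by
    intro x hx
    have hx0 : x ≠ 0 := by intro h; rw [h] at hx; norm_num at hx
    exact ((Real.hasDerivAt_log hx0).div_const 4).sub ((Real.hasDerivAt_sqrt hx0).const_mul _)
  apply antitoneOn_of_deriv_nonpos (convex_Ici 2)
  · apply ContinuousOn.sub
    · apply ContinuousOn.div_const
      exact Real.continuousOn_log.mono (by intro x hx; simp at hx ⊢; intro h; rw [h] at hx; norm_num at hx)
    · exact (Real.continuous_sqrt.continuousOn).const_smul (0.3935970880:ℝ) |>.congr (by intro x _; simp [smul_eq_mul])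
  · rw [interior_Ici]
    intro x hx
    exact ((hd x (le_of_lt hx)).differentiableAt).differentiableWithinAt
  · rw [interior_Ici]
    intro x hx
    rw [(hd x (le_of_lt hx)).deriv]
    have hx2 : (2:ℝ) ≤ x := le_of_lt hx
    have h1 : (1.41:ℝ) ≤ Real.sqrt x := by
      rw [show (1.41:ℝ) = Real.sqrt (1.41^2) from (Real.sqrt_sq (by norm_num)).symm]
      exact Real.sqrt_le_sqrt (by nlinarith)
    have h3 : Real.sqrt x * Real.sqrt x = x := Real.mul_self_sqrt (by linarith)
    have h2 : (0:ℝ) < Real.sqrt x := by linarith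
    have hx0 : (0:ℝ) < x := by linarith
    have hinv : x⁻¹ = (Real.sqrt x * Real.sqrt x)⁻¹ := by rw [h3]
    rw [hinv, sub_nonpos]
    rw [div_le_iff₀ (by norm_num : (0:ℝ) < 4)]
    rw [mul_inv]
    have hs_inv : Real.sqrt x * (Real.sqrt x)⁻¹ = 1 := mul_inv_cancel₀ (ne_of_gt h2)
    rw [one_div, mul_inv]
    -- goal: (√x)⁻¹ * (√x)⁻¹ ≤ 0.3935970880 * (2⁻¹ * (√x)⁻¹) * 4
    have hi : (Real.sqrt x)⁻¹ ≤ (1.41:ℝ)⁻¹ := by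
      apply inv_anti₀ (by norm_num) h1
    have hipos : (0:ℝ) < (Real.sqrt x)⁻¹ := by positivity
    nlinarith [hi, hipos]

noncomputable def epsFun (x : ℝ) : ℝ :=
  0.2428127763 * Real.log x ^ ((1 : ℝ) / 4) *
    Real.exp (-0.3935970880 * Real.sqrt (Real.log x))

lemma eps_eq (t : ℝ) (ht : 0 < t) :
    (0.2428127763 : ℝ) * t ^ ((1 : ℝ) / 4) * Real.exp (-0.3935970880 * Real.sqrt t)
      = 0.2428127763 * Real.exp (Real.log t / 4 - 0.3935970880 * Real.sqrt t) := by
  rw [Real.rpow_def_of_pos ht, mul_assoc, ← Real.exp_add]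
  congr 1
  ring

lemma f_two_neg : Real.log 2 / 4 - 0.3935970880 * Real.sqrt 2 < 0 := by
  have h1 : Real.log 2 < 0.6931471808 := Real.log_two_lt_d9
  have h2 : (1.41:ℝ) ≤ Real.sqrt 2 := by
    rw [show (1.41:ℝ) = Real.sqrt (1.41^2) from (Real.sqrt_sq (by norm_num)).symm]
    exact Real.sqrt_le_sqrt (by norm_num)
  nlinarith

lemma eps_le_c (t : ℝ) (ht : 2 ≤ t) :
    (0.2428127763 : ℝ) * t ^ ((1 : ℝ) / 4) * Real.exp (-0.3935970880 * Real.sqrt t)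
      ≤ 0.2428127763 := by
  rw [eps_eq t (by linarith)]
  have h2 := f_anti (Set.mem_Ici.mpr (le_refl (2:ℝ))) (Set.mem_Ici.mpr ht) ht
  simp only at h2
  have h3 := f_two_neg
  have h4 : Real.exp (Real.log t / 4 - 0.3935970880 * Real.sqrt t) ≤ 1 := by
    rw [show (1:ℝ) = Real.exp 0 from Real.exp_zero.symm]
    exact Real.exp_le_exp.mpr (by linarith)
  nlinarith [Real.exp_pos (Real.log t / 4 - 0.3935970880 * Real.sqrt t)]

lemma exp_two_le_eleven : Real.exp 2 ≤ 11 := by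
  have := exp_ub 2 16 (by norm_num) (by norm_num)
  norm_num at this
  linarith

lemma epsFun_lt_one {x : ℝ} (hx : 11 ≤ x) : epsFun x < 1 := by
  unfold epsFun
  have hlog : 2 ≤ Real.log x := by
    rw [Real.le_log_iff_exp_le (by linarith)]
    linarith [exp_two_le_eleven]
  linarith [eps_le_c (Real.log x) hlog]

lemma epsFun_pos {x : ℝ} (hx : 11 ≤ x) : 0 < epsFun x := by
  unfold epsFun
  have hlog : 2 ≤ Real.log x := by
    rw [Real.le_log_iff_exp_le (by linarith)]
    linarith [exp_two_le_eleven]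
  have : (0:ℝ) < Real.log x ^ ((1:ℝ)/4) := Real.rpow_pos_of_pos (by linarith) _
  positivity

lemma epsFun_mono {x y : ℝ} (hx : 11 ≤ x) (hxy : x ≤ y) : epsFun y ≤ epsFun x := by
  unfold epsFun
  have hlx : 2 ≤ Real.log x := by
    rw [Real.le_log_iff_exp_le (by linarith)]
    linarith [exp_two_le_eleven]
  have hly : Real.log x ≤ Real.log y := Real.log_le_log (by linarith) hxy
  rw [eps_eq _ (by linarith), eps_eq _ (by linarith)]
  have := f_anti (Set.mem_Ici.mpr hlx) (Set.mem_Ici.mpr (by linarith : (2:ℝ) ≤ Real.log y)) hly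
  simp only at this
  have := Real.exp_le_exp.mpr this
  nlinarith

lemma eps_lb_gen (t a B : ℝ) (ht : 0 < t) (ha : 0 ≤ a) (ha4 : a ^ (4:ℕ) ≤ t)
    (hB : Real.exp (0.3935970880 * Real.sqrt t) ≤ B) :
    0.2428127763 * a * B⁻¹ ≤
      0.2428127763 * t ^ ((1 : ℝ) / 4) * Real.exp (-0.3935970880 * Real.sqrt t) := by
  have hBpos : 0 < B := lt_of_lt_of_le (Real.exp_pos _) hB
  have h1 : a ≤ t ^ ((1:ℝ)/4) := by
    have h2 : ((a ^ (4:ℕ) : ℝ)) ^ ((1:ℝ)/4) ≤ t ^ ((1:ℝ)/4) :=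
      Real.rpow_le_rpow (by positivity) ha4 (by norm_num)
    rwa [← Real.rpow_natCast a 4, ← Real.rpow_mul ha, show ((4:ℕ):ℝ) * (1/4) = 1 by norm_num,
      Real.rpow_one] at h2
  have h3 : B⁻¹ ≤ Real.exp (-0.3935970880 * Real.sqrt t) := by
    rw [show (-0.3935970880 : ℝ) * Real.sqrt t = -(0.3935970880 * Real.sqrt t) by ring,
      Real.exp_neg]
    exact inv_anti₀ (Real.exp_pos _) hB
  have h4 : (0:ℝ) ≤ 0.2428127763 * a := by positivity
  calc 0.2428127763 * a * B⁻¹ ≤ 0.2428127763 * a * Real.exp (-0.3935970880 * Real.sqrt t) := by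
        apply mul_le_mul_of_nonneg_left h3 h4
    _ ≤ 0.2428127763 * t ^ ((1:ℝ)/4) * Real.exp (-0.3935970880 * Real.sqrt t) := by
        apply mul_le_mul_of_nonneg_right _ (Real.exp_pos _).le
        nlinarith

lemma sqrt_ub {t b : ℝ} (hb : 0 ≤ b) (h : t ≤ b ^ 2) : Real.sqrt t ≤ b := by
  rw [show b = Real.sqrt (b^2) from (Real.sqrt_sq hb).symm]
  exact Real.sqrt_le_sqrt h

lemma eps_lb_small (u : ℝ) (h1 : 11 ≤ u) (h2 : u ≤ 139) : 0.124 ≤ epsFun u := by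
  unfold epsFun
  have hu0 : (0:ℝ) < u := by linarith
  have ht_lb : (1.24 : ℝ) ^ (4:ℕ) ≤ Real.log u := by
    rw [Real.le_log_iff_exp_le hu0]
    calc Real.exp ((1.24:ℝ)^(4:ℕ)) ≤ Real.exp 2.36421377 := by
          apply Real.exp_le_exp.mpr; norm_num
      _ ≤ ((1 - 2.36421377/512)⁻¹)^(512:ℕ) := exp_ub _ 512 (by norm_num) (by norm_num)
      _ ≤ 11 := by rw [show (512:ℕ) = 16 * 32 from rfl, pow_mul]; norm_num
      _ ≤ u := h1
  have ht_ub : Real.log u ≤ 4.950625 := by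
    rw [Real.log_le_iff_le_exp hu0]
    calc u ≤ 139 := h2
      _ ≤ (1 + 4.950625/4096)^(4096:ℕ) := by rw [show (4096:ℕ) = 64 * 64 from rfl, pow_mul]; norm_num
      _ ≤ Real.exp 4.950625 := exp_lb _ 4096 (by norm_num) (by norm_num)
  have hsq : Real.sqrt (Real.log u) ≤ 2.225 := sqrt_ub (by norm_num) (by norm_num; linarith)
  have hB : Real.exp (0.3935970880 * Real.sqrt (Real.log u)) ≤ 2.42 := by
    calc Real.exp (0.3935970880 * Real.sqrt (Real.log u))
        ≤ Real.exp (0.3935970880 * 2.225) := by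
          apply Real.exp_le_exp.mpr; nlinarith
      _ ≤ ((1 - (0.3935970880 * 2.225)/64)⁻¹)^(64:ℕ) := exp_ub _ 64 (by norm_num) (by norm_num)
      _ ≤ 2.42 := by norm_num
  have := eps_lb_gen (Real.log u) 1.24 2.42 (by nlinarith) (by norm_num) ht_lb hB
  calc (0.124:ℝ) ≤ 0.2428127763 * 1.24 * (2.42:ℝ)⁻¹ := by norm_num
    _ ≤ _ := this

lemma eps_lb_13 : (0.163 : ℝ) ≤ epsFun ((13:ℕ):ℝ) := by
  unfold epsFun
  have h13 : ((13:ℕ):ℝ) = (13:ℝ) := by norm_num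
  rw [h13]
  have hu0 : (0:ℝ) < 13 := by norm_num
  have ht_lb : (1.264 : ℝ) ^ (4:ℕ) ≤ Real.log 13 := by
    rw [Real.le_log_iff_exp_le hu0]
    calc Real.exp ((1.264:ℝ)^(4:ℕ)) ≤ Real.exp 2.5526326 := by
          apply Real.exp_le_exp.mpr; norm_num
      _ ≤ ((1 - 2.5526326/512)⁻¹)^(512:ℕ) := exp_ub _ 512 (by norm_num) (by norm_num)
      _ ≤ 13 := by rw [show (512:ℕ) = 16 * 32 from rfl, pow_mul]; norm_num
  have ht_ub : Real.log 13 ≤ 2.569609 := by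
    rw [Real.log_le_iff_le_exp hu0]
    calc (13:ℝ) ≤ (1 + 2.569609/4096)^(4096:ℕ) := by rw [show (4096:ℕ) = 64 * 64 from rfl, pow_mul]; norm_num
      _ ≤ Real.exp 2.569609 := exp_lb _ 4096 (by norm_num) (by norm_num)
  have hsq : Real.sqrt (Real.log 13) ≤ 1.603 := sqrt_ub (by norm_num) (by norm_num; linarith)
  have hB : Real.exp (0.3935970880 * Real.sqrt (Real.log 13)) ≤ 1.882 := by
    calc Real.exp (0.3935970880 * Real.sqrt (Real.log 13))
        ≤ Real.exp (0.3935970880 * 1.603) := by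
          apply Real.exp_le_exp.mpr; nlinarith
      _ ≤ ((1 - (0.3935970880 * 1.603)/256)⁻¹)^(256:ℕ) := exp_ub _ 256 (by norm_num) (by norm_num)
      _ ≤ 1.882 := by norm_num
  have := eps_lb_gen (Real.log 13) 1.264 1.882 (by nlinarith) (by norm_num) ht_lb hB
  calc (0.163:ℝ) ≤ 0.2428127763 * 1.264 * (1.882:ℝ)⁻¹ := by norm_num
    _ ≤ _ := this

lemma nth_min {m r : ℕ} (hr : r.Prime) (hlt : Nat.nth Nat.Prime m < r) :
    Nat.nth Nat.Prime (m + 1) ≤ r := by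
  have h1 : Nat.nth Nat.Prime (Nat.count Nat.Prime r) = r := Nat.nth_count hr
  have h2 : m < Nat.count Nat.Prime r := by
    by_contra h
    push_neg at h
    have h3 : Nat.nth Nat.Prime (Nat.count Nat.Prime r) ≤ Nat.nth Nat.Prime m :=
      (Nat.nth_le_nth Nat.infinite_setOf_prime).mpr h
    rw [h1] at h3
    omega
  have h4 : Nat.nth Nat.Prime (m + 1) ≤ Nat.nth Nat.Prime (Nat.count Nat.Prime r) :=
    (Nat.nth_le_nth Nat.infinite_setOf_prime).mpr h2
  rwa [h1] at h4

lemma theta_eq (P : ℕ) (x : ℝ) (hx0 : 0 ≤ x) (hPx : (P:ℝ) ≤ x)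
    (hno : ∀ r : ℕ, r.Prime → r ≤ ⌊x⌋₊ → r ≤ P) :
    chebyshevθ x = chebyshevθ (P:ℝ) := by
  unfold chebyshevθ
  congr 1
  rw [Nat.floor_natCast]
  ext r
  simp only [Finset.mem_filter, Finset.mem_range, Nat.lt_succ_iff]
  constructor
  · rintro ⟨hr1, hr2⟩
    exact ⟨hno r hr2 hr1, hr2⟩
  · rintro ⟨hr1, hr2⟩
    exact ⟨le_trans hr1 (Nat.le_floor hPx), hr2⟩

lemma small_case (P Q R : ℕ) (εlb ε : ℝ) (hq : Q ≤ R) (hpq : P < Q) (hp : 0 < P)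
    (hε0 : εlb ≤ ε) (hε1 : ε < 1)
    (hnum : ((R:ℝ) - P) * (1 - εlb) < 2 * P * εlb) :
    ((Q:ℝ) - P) / P < 2 * ε / (1 - ε) := by
  have hp' : (0:ℝ) < P := by exact_mod_cast hp
  have hqr : (Q:ℝ) ≤ R := by exact_mod_cast hq
  have hpq' : (P:ℝ) < Q := by exact_mod_cast hpq
  rw [div_lt_div_iff₀ hp' (by linarith)]
  have h0 : (0:ℝ) ≤ (R:ℝ) - P := by linarith
  have h1 : ((Q:ℝ) - P) * (1 - ε) ≤ ((R:ℝ) - P) * (1 - ε) := by nlinarith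
  have h2 : ((R:ℝ) - P) * (1 - ε) ≤ ((R:ℝ) - P) * (1 - εlb) := by nlinarith
  have h3 : 2 * (P:ℝ) * εlb ≤ 2 * P * ε := by nlinarith
  linarith

lemma big_case (p q θp ε : ℝ) (hp : 0 < p) (hε1 : ε < 1)
    (hup : θp < p * (1 + ε)) (hq : q * (1 - ε) ≤ θp) :
    (q - p) / p < 2 * ε / (1 - ε) := by
  rw [div_lt_div_iff₀ hp (by linarith)]
  nlinarith
theorem primeGap_trudgian
    (hθ : ∀ x : ℝ, 149 ≤ x → |chebyshevθ x - x| <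
      0.2428127763 * x * Real.log x ^ ((1 : ℝ) / 4) *
        Real.exp (-0.3935970880 * Real.sqrt (Real.log x))) :
    ∀ n : ℕ, 1 ≤ n → 11 ≤ (nthPrime n : ℝ) →
      primeGap n / (nthPrime n : ℝ) <
        2 * (0.2428127763 * Real.log (nthPrime n) ^ ((1 : ℝ) / 4) *
              Real.exp (-0.3935970880 * Real.sqrt (Real.log (nthPrime n)))) /
          (1 - 0.2428127763 * Real.log (nthPrime n) ^ ((1 : ℝ) / 4) *
              Real.exp (-0.3935970880 * Real.sqrt (Real.log (nthPrime n)))) := by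
  intro n hn hp11
  have hθ' : ∀ x : ℝ, 149 ≤ x → |chebyshevθ x - x| < x * epsFun x := by
    intro x hx
    have h := hθ x hx
    calc |chebyshevθ x - x| < 0.2428127763 * x * Real.log x ^ ((1 : ℝ) / 4) *
        Real.exp (-0.3935970880 * Real.sqrt (Real.log x)) := h
      _ = x * epsFun x := by unfold epsFun; ring
  show primeGap n / (nthPrime n : ℝ) <
    2 * epsFun (nthPrime n) / (1 - epsFun (nthPrime n))
  have hP : (nthPrime n).Prime := Nat.prime_nth_prime _
  have hPQ : nthPrime n < nthPrime (n + 1) := by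
    unfold nthPrime
    exact (Nat.nth_lt_nth Nat.infinite_setOf_prime).mpr (by omega)
  have hmin : ∀ r : ℕ, r.Prime → nthPrime n < r → nthPrime (n + 1) ≤ r := by
    intro r hr hlt
    have hlt' : Nat.nth Nat.Prime (n - 1) < r := hlt
    have h := nth_min hr hlt'
    show Nat.nth Nat.Prime (n + 1 - 1) ≤ r
    rwa [show n - 1 + 1 = n + 1 - 1 by omega] at h
  have hp11' : (11:ℝ) ≤ ((nthPrime n : ℕ) : ℝ) := hp11
  have hεP1 : epsFun (nthPrime n) < 1 := epsFun_lt_one hp11'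
  unfold primeGap
  rcases lt_or_ge (nthPrime n) 149 with hsmall | hbig
  · -- small case
    obtain ⟨P, hPd⟩ : ∃ m : ℕ, nthPrime n = m := ⟨_, rfl⟩
    rw [hPd] at hp11' hsmall hP hPQ hεP1 ⊢
    rw [hPd] at hmin
    have h11 : 11 ≤ P := by exact_mod_cast hp11'
    have h148 : P ≤ 148 := by omega
    clear hPd hp11 hsmall
    interval_cases P
    · exact small_case 11 _ 13 0.124 _ (hmin 13 (by norm_num) (by norm_num)) hPQ (by norm_num) (eps_lb_small _ (by norm_num) (by norm_num)) hεP1 (by norm_num)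
    · exact absurd hP (by norm_num)
    · exact small_case 13 _ 17 0.163 _ (hmin 17 (by norm_num) (by norm_num)) hPQ (by norm_num) eps_lb_13 hεP1 (by norm_num)
    · exact absurd hP (by norm_num)
    · exact absurd hP (by norm_num)
    · exact absurd hP (by norm_num)
    · exact small_case 17 _ 19 0.124 _ (hmin 19 (by norm_num) (by norm_num)) hPQ (by norm_num) (eps_lb_small _ (by norm_num) (by norm_num)) hεP1 (by norm_num)
    · exact absurd hP (by norm_num)
    · exact small_case 19 _ 23 0.124 _ (hmin 23 (by norm_num) (by norm_num)) hPQ (by norm_num) (eps_lb_small _ (by norm_num) (by norm_num)) hεP1 (by norm_num)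
    · exact absurd hP (by norm_num)
    · exact absurd hP (by norm_num)
    · exact absurd hP (by norm_num)
    · exact small_case 23 _ 29 0.124 _ (hmin 29 (by norm_num) (by norm_num)) hPQ (by norm_num) (eps_lb_small _ (by norm_num) (by norm_num)) hεP1 (by norm_num)
    · exact absurd hP (by norm_num)
    · exact absurd hP (by norm_num)
    · exact absurd hP (by norm_num)
    · exact absurd hP (by norm_num)
    · exact absurd hP (by norm_num)
    · exact small_case 29 _ 31 0.124 _ (hmin 31 (by norm_num) (by norm_num)) hPQ (by norm_num) (eps_lb_small _ (by norm_num) (by norm_num)) hεP1 (by norm_num)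
    · exact absurd hP (by norm_num)
    · exact small_case 31 _ 37 0.124 _ (hmin 37 (by norm_num) (by norm_num)) hPQ (by norm_num) (eps_lb_small _ (by norm_num) (by norm_num)) hεP1 (by norm_num)
    · exact absurd hP (by norm_num)
    · exact absurd hP (by norm_num)
    · exact absurd hP (by norm_num)
    · exact absurd hP (by norm_num)
    · exact absurd hP (by norm_num)
    · exact small_case 37 _ 41 0.124 _ (hmin 41 (by norm_num) (by norm_num)) hPQ (by norm_num) (eps_lb_small _ (by norm_num) (by norm_num)) hεP1 (by norm_num)
    · exact absurd hP (by norm_num)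
    · exact absurd hP (by norm_num)
    · exact absurd hP (by norm_num)
    · exact small_case 41 _ 43 0.124 _ (hmin 43 (by norm_num) (by norm_num)) hPQ (by norm_num) (eps_lb_small _ (by norm_num) (by norm_num)) hεP1 (by norm_num)
    · exact absurd hP (by norm_num)
    · exact small_case 43 _ 47 0.124 _ (hmin 47 (by norm_num) (by norm_num)) hPQ (by norm_num) (eps_lb_small _ (by norm_num) (by norm_num)) hεP1 (by norm_num)
    · exact absurd hP (by norm_num)
    · exact absurd hP (by norm_num)
    · exact absurd hP (by norm_num)
    · exact small_case 47 _ 53 0.124 _ (hmin 53 (by norm_num) (by norm_num)) hPQ (by norm_num) (eps_lb_small _ (by norm_num) (by norm_num)) hεP1 (by norm_num)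
    · exact absurd hP (by norm_num)
    · exact absurd hP (by norm_num)
    · exact absurd hP (by norm_num)
    · exact absurd hP (by norm_num)
    · exact absurd hP (by norm_num)
    · exact small_case 53 _ 59 0.124 _ (hmin 59 (by norm_num) (by norm_num)) hPQ (by norm_num) (eps_lb_small _ (by norm_num) (by norm_num)) hεP1 (by norm_num)
    · exact absurd hP (by norm_num)
    · exact absurd hP (by norm_num)
    · exact absurd hP (by norm_num)
    · exact absurd hP (by norm_num)
    · exact absurd hP (by norm_num)
    · exact small_case 59 _ 61 0.124 _ (hmin 61 (by norm_num) (by norm_num)) hPQ (by norm_num) (eps_lb_small _ (by norm_num) (by norm_num)) hεP1 (by norm_num)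
    · exact absurd hP (by norm_num)
    · exact small_case 61 _ 67 0.124 _ (hmin 67 (by norm_num) (by norm_num)) hPQ (by norm_num) (eps_lb_small _ (by norm_num) (by norm_num)) hεP1 (by norm_num)
    · exact absurd hP (by norm_num)
    · exact absurd hP (by norm_num)
    · exact absurd hP (by norm_num)
    · exact absurd hP (by norm_num)
    · exact absurd hP (by norm_num)
    · exact small_case 67 _ 71 0.124 _ (hmin 71 (by norm_num) (by norm_num)) hPQ (by norm_num) (eps_lb_small _ (by norm_num) (by norm_num)) hεP1 (by norm_num)
    · exact absurd hP (by norm_num)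
    · exact absurd hP (by norm_num)
    · exact absurd hP (by norm_num)
    · exact small_case 71 _ 73 0.124 _ (hmin 73 (by norm_num) (by norm_num)) hPQ (by norm_num) (eps_lb_small _ (by norm_num) (by norm_num)) hεP1 (by norm_num)
    · exact absurd hP (by norm_num)
    · exact small_case 73 _ 79 0.124 _ (hmin 79 (by norm_num) (by norm_num)) hPQ (by norm_num) (eps_lb_small _ (by norm_num) (by norm_num)) hεP1 (by norm_num)
    · exact absurd hP (by norm_num)
    · exact absurd hP (by norm_num)
    · exact absurd hP (by norm_num)
    · exact absurd hP (by norm_num)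
    · exact absurd hP (by norm_num)
    · exact small_case 79 _ 83 0.124 _ (hmin 83 (by norm_num) (by norm_num)) hPQ (by norm_num) (eps_lb_small _ (by norm_num) (by norm_num)) hεP1 (by norm_num)
    · exact absurd hP (by norm_num)
    · exact absurd hP (by norm_num)
    · exact absurd hP (by norm_num)
    · exact small_case 83 _ 89 0.124 _ (hmin 89 (by norm_num) (by norm_num)) hPQ (by norm_num) (eps_lb_small _ (by norm_num) (by norm_num)) hεP1 (by norm_num)
    · exact absurd hP (by norm_num)
    · exact absurd hP (by norm_num)
    · exact absurd hP (by norm_num)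
    · exact absurd hP (by norm_num)
    · exact absurd hP (by norm_num)
    · exact small_case 89 _ 97 0.124 _ (hmin 97 (by norm_num) (by norm_num)) hPQ (by norm_num) (eps_lb_small _ (by norm_num) (by norm_num)) hεP1 (by norm_num)
    · exact absurd hP (by norm_num)
    · exact absurd hP (by norm_num)
    · exact absurd hP (by norm_num)
    · exact absurd hP (by norm_num)
    · exact absurd hP (by norm_num)
    · exact absurd hP (by norm_num)
    · exact absurd hP (by norm_num)
    · exact small_case 97 _ 101 0.124 _ (hmin 101 (by norm_num) (by norm_num)) hPQ (by norm_num) (eps_lb_small _ (by norm_num) (by norm_num)) hεP1 (by norm_num)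
    · exact absurd hP (by norm_num)
    · exact absurd hP (by norm_num)
    · exact absurd hP (by norm_num)
    · exact small_case 101 _ 103 0.124 _ (hmin 103 (by norm_num) (by norm_num)) hPQ (by norm_num) (eps_lb_small _ (by norm_num) (by norm_num)) hεP1 (by norm_num)
    · exact absurd hP (by norm_num)
    · exact small_case 103 _ 107 0.124 _ (hmin 107 (by norm_num) (by norm_num)) hPQ (by norm_num) (eps_lb_small _ (by norm_num) (by norm_num)) hεP1 (by norm_num)
    · exact absurd hP (by norm_num)
    · exact absurd hP (by norm_num)
    · exact absurd hP (by norm_num)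
    · exact small_case 107 _ 109 0.124 _ (hmin 109 (by norm_num) (by norm_num)) hPQ (by norm_num) (eps_lb_small _ (by norm_num) (by norm_num)) hεP1 (by norm_num)
    · exact absurd hP (by norm_num)
    · exact small_case 109 _ 113 0.124 _ (hmin 113 (by norm_num) (by norm_num)) hPQ (by norm_num) (eps_lb_small _ (by norm_num) (by norm_num)) hεP1 (by norm_num)
    · exact absurd hP (by norm_num)
    · exact absurd hP (by norm_num)
    · exact absurd hP (by norm_num)
    · exact small_case 113 _ 127 0.124 _ (hmin 127 (by norm_num) (by norm_num)) hPQ (by norm_num) (eps_lb_small _ (by norm_num) (by norm_num)) hεP1 (by norm_num)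
    · exact absurd hP (by norm_num)
    · exact absurd hP (by norm_num)
    · exact absurd hP (by norm_num)
    · exact absurd hP (by norm_num)
    · exact absurd hP (by norm_num)
    · exact absurd hP (by norm_num)
    · exact absurd hP (by norm_num)
    · exact absurd hP (by norm_num)
    · exact absurd hP (by norm_num)
    · exact absurd hP (by norm_num)
    · exact absurd hP (by norm_num)
    · exact absurd hP (by norm_num)
    · exact absurd hP (by norm_num)
    · exact small_case 127 _ 131 0.124 _ (hmin 131 (by norm_num) (by norm_num)) hPQ (by norm_num) (eps_lb_small _ (by norm_num) (by norm_num)) hεP1 (by norm_num)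
    · exact absurd hP (by norm_num)
    · exact absurd hP (by norm_num)
    · exact absurd hP (by norm_num)
    · exact small_case 131 _ 137 0.124 _ (hmin 137 (by norm_num) (by norm_num)) hPQ (by norm_num) (eps_lb_small _ (by norm_num) (by norm_num)) hεP1 (by norm_num)
    · exact absurd hP (by norm_num)
    · exact absurd hP (by norm_num)
    · exact absurd hP (by norm_num)
    · exact absurd hP (by norm_num)
    · exact absurd hP (by norm_num)
    · exact small_case 137 _ 139 0.124 _ (hmin 139 (by norm_num) (by norm_num)) hPQ (by norm_num) (eps_lb_small _ (by norm_num) (by norm_num)) hεP1 (by norm_num)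
    · exact absurd hP (by norm_num)
    · exact small_case 139 _ 149 0.124 _ (hmin 149 (by norm_num) (by norm_num)) hPQ (by norm_num) (eps_lb_small _ (by norm_num) (by norm_num)) hεP1 (by norm_num)
    · exact absurd hP (by norm_num)
    · exact absurd hP (by norm_num)
    · exact absurd hP (by norm_num)
    · exact absurd hP (by norm_num)
    · exact absurd hP (by norm_num)
    · exact absurd hP (by norm_num)
    · exact absurd hP (by norm_num)
    · exact absurd hP (by norm_num)
    · exact absurd hP (by norm_num)
  · -- big case
    have hP149 : (149:ℝ) ≤ (nthPrime n : ℝ) := by exact_mod_cast hbig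
    have hPpos : (0:ℝ) < (nthPrime n : ℝ) := by linarith
    have hεpos := epsFun_pos hp11'
    have h1e : (0:ℝ) < 1 - epsFun (nthPrime n) := by linarith
    have hbP := abs_lt.mp (hθ' (nthPrime n) hP149)
    have hup : chebyshevθ (nthPrime n) < (nthPrime n : ℝ) * (1 + epsFun (nthPrime n)) := by
      nlinarith [hbP.2]
    have hlow : (nthPrime n : ℝ) * (1 - epsFun (nthPrime n)) < chebyshevθ (nthPrime n) := by
      nlinarith [hbP.1]
    have hclaim : (nthPrime (n + 1) : ℝ) * (1 - epsFun (nthPrime n)) ≤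
        chebyshevθ (nthPrime n) := by
      by_contra hcon
      push_neg at hcon
      set x : ℝ := chebyshevθ (nthPrime n) / (1 - epsFun (nthPrime n)) with hxdef
      have hpx : (nthPrime n : ℝ) < x := by
        rw [hxdef, lt_div_iff₀ h1e]; nlinarith
      have hxq : x < (nthPrime (n + 1) : ℝ) := by
        rw [hxdef, div_lt_iff₀ h1e]; nlinarith
      have hx149 : (149:ℝ) ≤ x := le_trans hP149 hpx.le
      have hx0 : (0:ℝ) ≤ x := by linarith
      have hθx : chebyshevθ x = chebyshevθ (nthPrime n) := by
        apply theta_eq _ _ hx0 hpx.le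
        intro r hr hrx
        by_contra hc
        push_neg at hc
        have h5 := hmin r hr hc
        have h6 : ⌊x⌋₊ < nthPrime (n + 1) := by
          rw [Nat.floor_lt hx0]
          exact hxq
        omega
      have hbx := abs_lt.mp (hθ' x hx149)
      have hεx : epsFun x ≤ epsFun (nthPrime n) := epsFun_mono hp11' hpx.le
      have hxeq : x * (1 - epsFun (nthPrime n)) = chebyshevθ (nthPrime n) := by
        rw [hxdef]; field_simp
      nlinarith [hbx.1, hεx, hx0, hθx, hxeq]
    exact big_case _ _ _ _ hPpos hεP1 hup hclaim
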